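/- For all real x and all δ ≠ 0, log σ(x) ≥ (x−δ)/2 − λ(δ)(x² − δ²) + log σ(δ), where σ(x) = 1/(1+e^{−x}) and λ(δ) = (1/(2δ))(σ(δ) − 1/2). -/

import Mathlib

noncomputable def logisticSigmoid (x : ℝ) : ℝ := 1 / (1 + Real.exp (-x))

noncomputable def jaakkolaLambda (δ : ℝ) : ℝ := (logisticSigmoid δ - 1/2) / (2 * δ)

lemma exp_neg_denom_pos (t : ℝ) : 0 < 1 + Real.exp (-t) := by positivity

lemma sig_pos (t : ℝ) : 0 < logisticSigmoid t := by
  rw [logisticSigmoid]; positivity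

lemma logSig (t : ℝ) : Real.log (logisticSigmoid t) = -(Real.log (1 + Real.exp (-t))) := by
  rw [logisticSigmoid, one_div, Real.log_inv]

lemma half_tanh (t : ℝ) : Real.exp (-t) / (1 + Real.exp (-t)) - 1/2 = -(Real.tanh (t/2)) / 2 := by
  rw [Real.tanh_eq_sinh_div_cosh, Real.sinh_eq, Real.cosh_eq]
  have h2 : Real.exp (-t) = Real.exp (-(t/2)) * Real.exp (-(t/2)) := by
    rw [← Real.exp_add]; ring_nf
  have h1 : Real.exp (-(t/2)) * Real.exp (t/2) = 1 := by
    rw [← Real.exp_add]; simp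
  set u := Real.exp (-(t/2)) with hu
  set v := Real.exp (t/2) with hv
  have e1 : 0 < v := Real.exp_pos _
  have e2 : 0 < u := Real.exp_pos _
  rw [h2]
  have hden : 0 < 1 + u * u := by positivity
  have hc : 0 < v + u := by positivity
  field_simp
  nlinarith [h1]

lemma sig_sub_half (t : ℝ) : logisticSigmoid t - 1/2 = Real.tanh (t/2) / 2 := by
  have h := half_tanh t
  have hp := exp_neg_denom_pos t
  rw [logisticSigmoid]
  have he : (1:ℝ) / (1 + Real.exp (-t)) = 1 - Real.exp (-t) / (1 + Real.exp (-t)) := by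
    field_simp; ring
  rw [he]
  linarith

lemma lam_eq (δ : ℝ) : jaakkolaLambda δ = Real.tanh (δ/2) / (4 * δ) := by
  rw [jaakkolaLambda, sig_sub_half, div_div]
  ring_nf

lemma lam_even (δ : ℝ) : jaakkolaLambda (-δ) = jaakkolaLambda δ := by
  rw [lam_eq, lam_eq, neg_div, Real.tanh_neg]
  ring

lemma logSig_neg (t : ℝ) : Real.log (logisticSigmoid (-t)) = Real.log (logisticSigmoid t) - t := by
  have hp := exp_neg_denom_pos t
  have h1 : (0:ℝ) < 1 + Real.exp t := by positivity
  have hee : Real.exp (-t) * Real.exp t = 1 := by rw [← Real.exp_add]; simp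
  have h : logisticSigmoid (-t) = Real.exp (-t) * logisticSigmoid t := by
    rw [logisticSigmoid, logisticSigmoid, neg_neg]
    field_simp
    nlinarith [hee]
  rw [h, Real.log_mul (Real.exp_ne_zero _) (ne_of_gt (sig_pos t)), Real.log_exp]
  ring

open Real Set

lemma sinh_lt_mul_cosh {u : ℝ} (hu : 0 < u) : Real.sinh u < u * Real.cosh u := by
  have h : StrictMonoOn (fun v : ℝ => v * Real.cosh v - Real.sinh v) (Set.Ici 0) := by
    apply strictMonoOn_of_deriv_pos (convex_Ici 0)
    · fun_prop
    · intro t ht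
      rw [interior_Ici] at ht
      have hd : HasDerivAt (fun v : ℝ => v * Real.cosh v - Real.sinh v) (t * Real.sinh t) t := by
        have := ((hasDerivAt_id t).mul (Real.hasDerivAt_cosh t)).sub (Real.hasDerivAt_sinh t)
        exact this.congr_deriv (by simp only [id_eq]; ring)
      rw [hd.deriv]
      exact mul_pos ht (Real.sinh_pos_iff.mpr ht)
  have := h (Set.mem_Ici.mpr (le_refl 0)) (Set.mem_Ici.mpr (le_of_lt hu)) hu
  simpa using this

lemma mul_sinh_lt {q p : ℝ} (hq : 0 < q) (hqp : q < p) : p * Real.sinh q < q * Real.sinh p := by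
  have h : StrictMonoOn (fun v : ℝ => Real.sinh v / v) (Set.Ioi 0) := by
    apply strictMonoOn_of_deriv_pos (convex_Ioi 0)
    · exact ContinuousOn.div (Real.continuous_sinh.continuousOn) (continuous_id.continuousOn)
        (fun t ht => ne_of_gt ht)
    · intro t ht
      rw [interior_Ioi] at ht
      have hd : HasDerivAt (fun v : ℝ => Real.sinh v / v)
          ((Real.cosh t * t - Real.sinh t * 1) / t ^ 2) t :=
        (Real.hasDerivAt_sinh t).div (hasDerivAt_id t) (ne_of_gt ht)
      rw [hd.deriv]
      have := sinh_lt_mul_cosh ht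
      have ht2 : (0:ℝ) < t ^ 2 := pow_pos ht 2
      rw [div_pos_iff]
      left
      constructor
      · nlinarith
      · exact ht2
  have hp : 0 < p := lt_trans hq hqp
  have := h (Set.mem_Ioi.mpr hq) (Set.mem_Ioi.mpr hp) hqp
  rw [div_lt_div_iff₀ hq hp] at this
  linarith

lemma tanh_div_strictAnti {a b : ℝ} (ha : 0 < a) (hab : a < b) :
    Real.tanh b / b < Real.tanh a / a := by
  have hb : 0 < b := lt_trans ha hab
  have key := mul_sinh_lt (q := b - a) (p := a + b) (by linarith) (by linarith)
  rw [Real.sinh_sub, Real.sinh_add] at key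
  have hca := Real.cosh_pos (x := a)
  have hcb := Real.cosh_pos (x := b)
  rw [Real.tanh_eq_sinh_div_cosh, Real.tanh_eq_sinh_div_cosh, div_div, div_div,
    div_lt_div_iff₀ (by positivity) (by positivity)]
  nlinarith

lemma main_pos (x δ : ℝ) (hδ : 0 < δ) (hx : 0 ≤ x) :
    Real.log (logisticSigmoid x) ≥
      (x - δ) / 2 - jaakkolaLambda δ * (x ^ 2 - δ ^ 2) + Real.log (logisticSigmoid δ) := by
  set lam := jaakkolaLambda δ with hlam
  set F : ℝ → ℝ := fun t => -(Real.log (1 + Real.exp (-t))) - t/2 + lam * t^2 with hF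
  have hderiv : ∀ t : ℝ, HasDerivAt F
      (Real.exp (-t)/(1+Real.exp (-t)) - 1/2 + lam * (2*t)) t := by
    intro t
    have h1 : HasDerivAt (fun s : ℝ => 1 + Real.exp (-s)) (-Real.exp (-t)) t := by
      have h0 := (Real.hasDerivAt_exp (-t)).comp t (hasDerivAt_neg t)
      have h0' : HasDerivAt (fun s : ℝ => Real.exp (-s)) (-Real.exp (-t)) t := by
        exact h0.congr_deriv (by ring)
      simpa using h0'.const_add 1
    have h2 : HasDerivAt (fun s : ℝ => Real.log (1 + Real.exp (-s)))
        (-Real.exp (-t)/(1+Real.exp (-t))) t :=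
      h1.log (ne_of_gt (exp_neg_denom_pos t))
    have h3 : HasDerivAt (fun s : ℝ => lam * s^2) (lam * (2*t)) t := by
      have := (hasDerivAt_pow 2 t).const_mul lam
      simpa [mul_comm, mul_assoc] using this
    have h4 : HasDerivAt (fun s : ℝ => s/2) (1/2 : ℝ) t := by
      simpa using (hasDerivAt_id t).div_const 2
    have := ((h2.neg).sub h4).add h3
    exact this.congr_deriv (by ring)
  have contF : Continuous F := by
    have hlog : Continuous fun t : ℝ => Real.log (1 + Real.exp (-t)) :=
      Continuous.log (by continuity) (fun t => ne_of_gt (exp_neg_denom_pos t))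
    exact ((hlog.neg).sub (continuous_id.div_const 2)).add
      (continuous_const.mul (continuous_pow 2))
  have hf'eq : ∀ t : ℝ, Real.exp (-t)/(1+Real.exp (-t)) - 1/2 + lam * (2*t)
      = -(Real.tanh (t/2))/2 + Real.tanh (δ/2) * t / (2*δ) := by
    intro t
    rw [hlam, lam_eq]
    have h1 := half_tanh t
    have h4 : Real.tanh (δ/2)/(4*δ) * (2*t) = Real.tanh (δ/2)*t/(2*δ) := by
      field_simp; ring
    linarith
  have hanti : StrictAntiOn F (Set.Icc 0 δ) := by
    apply strictAntiOn_of_deriv_neg (convex_Icc 0 δ) contF.continuousOn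
    intro t ht
    rw [interior_Icc] at ht
    rw [(hderiv t).deriv, hf'eq t]
    have ht1 := ht.1
    have ht2 := ht.2
    have key := tanh_div_strictAnti (a := t/2) (b := δ/2) (by linarith) (by linarith)
    rw [div_lt_div_iff₀ (by linarith) (by linarith)] at key
    have heq : -Real.tanh (t/2)/2 + Real.tanh (δ/2)*t/(2*δ)
        = (Real.tanh (δ/2)*t - Real.tanh (t/2)*δ)/(2*δ) := by
      field_simp; ring
    rw [heq]
    apply div_neg_of_neg_of_pos <;> linarith
  have hmono : StrictMonoOn F (Set.Ici δ) := by
    apply strictMonoOn_of_deriv_pos (convex_Ici δ) contF.continuousOn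
    intro t ht
    rw [interior_Ici] at ht
    rw [(hderiv t).deriv, hf'eq t]
    have htt := Set.mem_Ioi.mp ht
    have key := tanh_div_strictAnti (a := δ/2) (b := t/2) (by linarith) (by linarith)
    rw [div_lt_div_iff₀ (by linarith) (by linarith)] at key
    have heq : -Real.tanh (t/2)/2 + Real.tanh (δ/2)*t/(2*δ)
        = (Real.tanh (δ/2)*t - Real.tanh (t/2)*δ)/(2*δ) := by
      field_simp; ring
    rw [heq]
    apply div_pos <;> linarith
  have hFineq : F δ ≤ F x := by
    rcases le_or_gt x δ with hxd | hxd
    · exact hanti.antitoneOn ⟨hx, hxd⟩ ⟨hδ.le, le_refl δ⟩ hxd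
    · exact (hmono (Set.mem_Ici.mpr (le_refl δ)) (Set.mem_Ici.mpr hxd.le) hxd).le
  have hgoal : -(Real.log (1 + Real.exp (-δ))) - δ/2 + lam * δ^2
      ≤ -(Real.log (1 + Real.exp (-x))) - x/2 + lam * x^2 := hFineq
  have e1 := logSig x
  have e2 := logSig δ
  have hr : lam * (x^2 - δ^2) = lam * x^2 - lam * δ^2 := by ring
  linarith

lemma main_pos2 (x δ : ℝ) (hδ : 0 < δ) :
    Real.log (logisticSigmoid x) ≥
      (x - δ) / 2 - jaakkolaLambda δ * (x ^ 2 - δ ^ 2) + Real.log (logisticSigmoid δ) := by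
  rcases le_or_gt 0 x with hx | hx
  · exact main_pos x δ hδ hx
  · have h := main_pos (-x) δ hδ (by linarith)
    rw [neg_sq] at h
    have e := logSig_neg x
    linarith

theorem jaakkola_bound (x δ : ℝ) (hδ : δ ≠ 0) :
    Real.log (logisticSigmoid x) ≥
      (x - δ) / 2 - jaakkolaLambda δ * (x ^ 2 - δ ^ 2) + Real.log (logisticSigmoid δ) := by
  rcases lt_or_gt_of_ne hδ with h | h
  · have h2 := main_pos2 x (-δ) (by linarith)
    rw [lam_even, logSig_neg, neg_sq] at h2
    linarith
  · exact main_pos2 x δ h
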